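/- Within a single batch, the dynamic oracle exceeds the best fixed expert by at most twice the batch length times the batch's total variation: if y_t^n ∈ [0,1] for t in an interval I of length Δ, and V_I = Σ_{t∈I, t+1∈I} sup_n |y_t^n − y_{t+1}^n|, then Σ_{t∈I} max_n y_t^n − max_n Σ_{t∈I} y_t^n ≤ Δ · V_I. -/

import Mathlib

lemma abs_sub_le_sum_Ico (f : ℕ → ℝ) {a b : ℕ} (h : a ≤ b) :
    |f a - f b| ≤ ∑ u ∈ Finset.Ico a b, |f u - f (u + 1)| := by
  induction b, h using Nat.le_induction with
  | base => simp
  | succ b hb ih =>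
    rw [Finset.sum_Ico_succ_top hb]
    calc |f a - f (b + 1)| ≤ |f a - f b| + |f b - f (b + 1)| := abs_sub_le _ _ _
      _ ≤ _ := add_le_add ih le_rfl

/-- Within a single batch `I = {τ+1, …, τ+Δ}`, the dynamic oracle exceeds the
best fixed expert by at most the batch length times the batch's total variation. -/
theorem stmt_5 (N τ Δ : ℕ) (hN : 0 < N) (hΔ : 1 ≤ Δ)
    (hne : (Finset.univ : Finset (Fin N)).Nonempty)
    (y : ℕ → Fin N → ℝ)
    (hy : ∀ t ∈ Finset.Icc (τ + 1) (τ + Δ), ∀ n, y t n ∈ Set.Icc (0:ℝ) 1) :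
    (∑ t ∈ Finset.Icc (τ + 1) (τ + Δ), Finset.univ.sup' hne (fun n => y t n)) -
      Finset.univ.sup' hne (fun n => ∑ t ∈ Finset.Icc (τ + 1) (τ + Δ), y t n) ≤
      (Δ : ℝ) * ∑ t ∈ Finset.Ico (τ + 1) (τ + Δ),
        Finset.univ.sup' hne (fun n => |y t n - y (t + 1) n|) := by
  classical
  set I := Finset.Icc (τ + 1) (τ + Δ) with hIdef
  set V : ℝ := ∑ t ∈ Finset.Ico (τ + 1) (τ + Δ),
      Finset.univ.sup' hne (fun n => |y t n - y (t + 1) n|) with hVdef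
  have hInonempty : I.Nonempty := by
    refine ⟨τ + 1, ?_⟩
    simp [hIdef, Finset.mem_Icc]
    omega
  -- pick t* maximizing the per-step sup
  obtain ⟨ts, htsI, htsmax⟩ :=
    I.exists_max_image (fun t => Finset.univ.sup' hne (fun n => y t n)) hInonempty
  -- pick n* attaining sup at t*
  obtain ⟨ns, _, hnsmax⟩ := Finset.exists_max_image Finset.univ (y ts) hne
  have hts_eq : Finset.univ.sup' hne (fun n => y ts n) = y ts ns := by
    apply le_antisymm
    · exact Finset.sup'_le _ _ fun n _ => hnsmax n (Finset.mem_univ n)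
    · exact Finset.le_sup' _ (Finset.mem_univ ns)
  -- path bound: for t in I, |y t ns - y ts ns| ≤ V
  have hpath : ∀ t ∈ I, |y t ns - y ts ns| ≤ V := by
    intro t htI
    rw [hIdef, Finset.mem_Icc] at htI
    have htsI' := htsI
    rw [hIdef, Finset.mem_Icc] at htsI'
    have key : ∀ a b : ℕ, τ + 1 ≤ a → b ≤ τ + Δ → a ≤ b →
        |y a ns - y b ns| ≤ V := by
      intro a b ha hb hab
      calc |y a ns - y b ns| ≤ ∑ u ∈ Finset.Ico a b, |y u ns - y (u + 1) ns| :=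
            abs_sub_le_sum_Ico (fun u => y u ns) hab
        _ ≤ ∑ u ∈ Finset.Ico a b,
              Finset.univ.sup' hne (fun n => |y u n - y (u + 1) n|) := by
            exact Finset.sum_le_sum fun u _ =>
              Finset.le_sup' (fun n => |y u n - y (u + 1) n|) (Finset.mem_univ ns)
        _ ≤ V := by
            rw [hVdef]
            apply Finset.sum_le_sum_of_subset_of_nonneg
            · apply Finset.Ico_subset_Ico <;> omega
            · intro u _ _
              exact le_trans (abs_nonneg (y u ns - y (u + 1) ns))
                (Finset.le_sup' (fun n => |y u n - y (u + 1) n|) (Finset.mem_univ ns))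
    rcases le_total t ts with h | h
    · exact key t ts htI.1 htsI'.2 h
    · rw [abs_sub_comm]; exact key ts t htsI'.1 htI.2 h
  -- per-step bound: sup_n y t n ≤ y t ns + V
  have hstep : ∀ t ∈ I, Finset.univ.sup' hne (fun n => y t n) ≤ y t ns + V := by
    intro t htI
    have h1 := htsmax t htI
    have h2 := hpath t htI
    have h3 : y ts ns - y t ns ≤ |y t ns - y ts ns| := by
      rw [abs_sub_comm]; exact le_abs_self _
    rw [hts_eq] at h1
    linarith
  have hcard : I.card = Δ := by rw [hIdef, Nat.card_Icc]; omega
  have hsum : (∑ t ∈ I, Finset.univ.sup' hne (fun n => y t n)) ≤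
      (∑ t ∈ I, y t ns) + (Δ : ℝ) * V := by
    calc (∑ t ∈ I, Finset.univ.sup' hne (fun n => y t n))
        ≤ ∑ t ∈ I, (y t ns + V) := Finset.sum_le_sum hstep
      _ = (∑ t ∈ I, y t ns) + (Δ : ℝ) * V := by
          rw [Finset.sum_add_distrib, Finset.sum_const, hcard, nsmul_eq_mul]
  have hbest : (∑ t ∈ I, y t ns) ≤
      Finset.univ.sup' hne (fun n => ∑ t ∈ I, y t n) :=
    Finset.le_sup' (fun n => ∑ t ∈ I, y t n) (Finset.mem_univ ns)
  linarith
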